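/- Let M be a compact set in ℝⁿ \ {0} that is the boundary of a bounded domain strictly starlike with respect to 0, given by a radial function r: S^{n-1} → (0,∞), and let f_M(x) = r(x/|x|)²·x/|x|² be the quasi-inversion. Then for x, y ∈ ℝⁿ \ {0} with |x| ≤ |y|, setting λ = (|f_M(y)| + |f_M(x) − f_M(y)|)/|f_M(y)| and z = λx, one has |f_M(x) − f_M(z)| ≤ |f_M(x) − f_M(y)| ≤ (2 r_y²/r_x² + 1)·|f_M(x) − f_M(z)|, where r_x = r(x/|x|) and r_y = r(y/|y|). -/

import Mathlib

lemma aux10 (RX RY nx ny D : ℝ) (hRX : 0 < RX) (hRY : 0 < RY) (hnx : 0 < nx)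
    (hxy : nx ≤ ny) (hD : 0 ≤ D)
    (h1 : RX ^ 2 / nx ≤ RY ^ 2 / ny + D) (h2 : D ≤ RX ^ 2 / nx + RY ^ 2 / ny) :
    (RX ^ 2 / nx) * D / (RY ^ 2 / ny + D) ≤ D ∧
    D ≤ (2 * RY ^ 2 / RX ^ 2 + 1) * ((RX ^ 2 / nx) * D / (RY ^ 2 / ny + D)) := by
  have hny : 0 < ny := lt_of_lt_of_le hnx hxy
  set a := RX ^ 2 / nx with ha'
  set b := RY ^ 2 / ny with hb'
  have ha : 0 < a := by positivity
  have hb : 0 < b := by positivity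
  have hbD : 0 < b + D := by linarith
  constructor
  · rw [div_le_iff₀ hbD]
    nlinarith
  · have h3 : b ≤ RY ^ 2 / nx := by
      apply div_le_div_of_nonneg_left (by positivity) hnx hxy
    have h4 : RY ^ 2 / RX ^ 2 * a = RY ^ 2 / nx := by
      rw [ha']; field_simp
    have hc : b ≤ RY ^ 2 / RX ^ 2 * a := by rw [h4]; exact h3
    have h5 : b + D ≤ (2 * RY ^ 2 / RX ^ 2 + 1) * a := by
      have : (2 * RY ^ 2 / RX ^ 2 + 1) * a = 2 * (RY ^ 2 / RX ^ 2 * a) + a := by ring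
      rw [this]; linarith
    rw [mul_div_assoc', le_div_iff₀ hbD]
    nlinarith [mul_le_mul_of_nonneg_right h5 hD]

theorem stmt10 (n : ℕ) (r : EuclideanSpace ℝ (Fin n) → ℝ)
    (hr : ∀ u, ‖u‖ = 1 → 0 < r u) (hrc : Continuous r)
    (x y : EuclideanSpace ℝ (Fin n)) (hx : x ≠ 0) (hy : y ≠ 0) (hxy : ‖x‖ ≤ ‖y‖) :
    let fM : EuclideanSpace ℝ (Fin n) → EuclideanSpace ℝ (Fin n) :=
      fun w => (r (‖w‖⁻¹ • w) ^ 2 / ‖w‖ ^ 2) • w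
    let lam : ℝ := (‖fM y‖ + ‖fM x - fM y‖) / ‖fM y‖
    let z := lam • x
    ‖fM x - fM z‖ ≤ ‖fM x - fM y‖ ∧
    ‖fM x - fM y‖ ≤ (2 * r (‖y‖⁻¹ • y) ^ 2 / r (‖x‖⁻¹ • x) ^ 2 + 1) * ‖fM x - fM z‖ := by
  intro fM lam z
  have hnx : (0:ℝ) < ‖x‖ := norm_pos_iff.mpr hx
  have hny : (0:ℝ) < ‖y‖ := norm_pos_iff.mpr hy
  have hux : ‖(‖x‖⁻¹ • x : EuclideanSpace ℝ (Fin n))‖ = 1 := by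
    rw [norm_smul, norm_inv, norm_norm, inv_mul_cancel₀ hnx.ne']
  have huy : ‖(‖y‖⁻¹ • y : EuclideanSpace ℝ (Fin n))‖ = 1 := by
    rw [norm_smul, norm_inv, norm_norm, inv_mul_cancel₀ hny.ne']
  set RX := r (‖x‖⁻¹ • x) with hRX'
  set RY := r (‖y‖⁻¹ • y) with hRY'
  have hRX : 0 < RX := hr _ hux
  have hRY : 0 < RY := hr _ huy
  have hax : ‖fM x‖ = RX ^ 2 / ‖x‖ := by
    show ‖(RX ^ 2 / ‖x‖ ^ 2) • x‖ = _
    rw [norm_smul, Real.norm_eq_abs, abs_of_pos (by positivity)]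
    field_simp
  have hay : ‖fM y‖ = RY ^ 2 / ‖y‖ := by
    show ‖(RY ^ 2 / ‖y‖ ^ 2) • y‖ = _
    rw [norm_smul, Real.norm_eq_abs, abs_of_pos (by positivity)]
    field_simp
  set a := RX ^ 2 / ‖x‖ with ha'
  set b := RY ^ 2 / ‖y‖ with hb'
  have ha : 0 < a := by positivity
  have hb : 0 < b := by positivity
  set D := ‖fM x - fM y‖ with hD'
  have hD : 0 ≤ D := norm_nonneg _
  have hbD : 0 < b + D := by linarith
  have hlam0 : lam = (‖fM y‖ + ‖fM x - fM y‖) / ‖fM y‖ := rfl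
  have hlam : lam = (b + D) / b := by rw [hlam0, hay, ← hD']
  have hlampos : 0 < lam := by rw [hlam]; positivity
  have hnz : ‖z‖ = lam * ‖x‖ := by
    show ‖lam • x‖ = _
    rw [norm_smul, Real.norm_eq_abs, abs_of_pos hlampos]
  have huz : (‖z‖⁻¹ • z : EuclideanSpace ℝ (Fin n)) = ‖x‖⁻¹ • x := by
    show ‖z‖⁻¹ • (lam • x) = _
    rw [hnz, smul_smul]
    congr 1
    field_simp
  have hfz : fM z = lam⁻¹ • fM x := by
    show (r (‖z‖⁻¹ • z) ^ 2 / ‖z‖ ^ 2) • z = lam⁻¹ • ((RX ^ 2 / ‖x‖ ^ 2) • x)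
    rw [huz, hnz]
    show (RX ^ 2 / (lam * ‖x‖) ^ 2) • (lam • x) = _
    rw [smul_smul, smul_smul]
    congr 1
    field_simp
  have hdiff : fM x - fM z = (1 - lam⁻¹) • fM x := by
    rw [hfz, sub_smul, one_smul]
  have hlaminv : 1 - lam⁻¹ = D / (b + D) := by
    rw [hlam, inv_div]
    field_simp
    ring
  have hnorm : ‖fM x - fM z‖ = a * D / (b + D) := by
    rw [hdiff, norm_smul, Real.norm_eq_abs, hlaminv, abs_of_nonneg (by positivity), hax]
    ring
  have h1 : a ≤ b + D := by
    have := norm_sub_norm_le (fM x) (fM y)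
    rw [hax, hay] at this
    linarith
  have h2 : D ≤ a + b := by
    have := norm_sub_le (fM x) (fM y)
    rw [hax, hay] at this
    linarith
  have := aux10 RX RY ‖x‖ ‖y‖ D hRX hRY hnx hxy hD (by rw [← ha', ← hb']; exact h1)
    (by rw [← ha', ← hb']; exact h2)
  rw [hnorm]
  exact ⟨this.1, this.2⟩
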